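/- Let ℓ > 0 and suppose h : ℝ → ℝ is a differentiable function defined on all of ℝ satisfying h'(x) = (1/2) h(x)² − 2/ℓ² for all x ∈ ℝ. Then |h(x)| ≤ 2/ℓ for all x ∈ ℝ. -/

import Mathlib

lemma riccati_upper (ℓ : ℝ) (hℓ : 0 < ℓ) (h : ℝ → ℝ)
    (hdiff : Differentiable ℝ h)
    (hode : ∀ x : ℝ, deriv h x = (1/2) * (h x)^2 - 2/ℓ^2) :
    ∀ x : ℝ, h x ≤ 2/ℓ := by
  by_contra hcon
  push_neg at hcon
  obtain ⟨x₀, hx₀⟩ := hcon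
  set c : ℝ := 2/ℓ with hc_def
  have hc : 0 < c := by positivity
  have ode' : ∀ x, deriv h x = (h x ^ 2 - c ^ 2) / 2 := by
    intro x
    rw [hode x, hc_def]
    field_simp
  set a' : ℝ := (h x₀ + c) / 2 with ha'_def
  have haa' : a' < h x₀ := by simp only [ha'_def]; linarith
  have hca' : c < a' := by simp only [ha'_def]; linarith
  have ha' : 0 < a' := lt_trans hc hca'
  -- Step 1: h stays ≥ a' to the right of x₀
  have hge : ∀ x, x₀ ≤ x → a' ≤ h x := by
    by_contra hcon2
    push_neg at hcon2
    obtain ⟨x₁, hx₁le, hx₁lt⟩ := hcon2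
    set S : Set ℝ := {x | x₀ ≤ x ∧ h x ≤ a'} with hS_def
    have hSclosed : IsClosed S := by
      have : S = {x | x₀ ≤ x} ∩ {x | h x ≤ a'} := rfl
      rw [this]
      exact (isClosed_le continuous_const continuous_id).inter
        (isClosed_le hdiff.continuous continuous_const)
    have hSne : S.Nonempty := ⟨x₁, hx₁le, le_of_lt hx₁lt⟩
    have hSbdd : BddBelow S := ⟨x₀, fun y hy => hy.1⟩
    set T : ℝ := sInf S with hT_def
    have hTS : T ∈ S := hSclosed.csInf_mem hSne hSbdd
    obtain ⟨hT1, hT2⟩ := hTS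
    have hx₀T : x₀ < T := by
      rcases lt_or_eq_of_le hT1 with hlt | heq
      · exact hlt
      · exfalso; rw [← heq] at hT2; linarith
    -- on (x₀, T), h > a'
    have hmid : ∀ x ∈ Set.Ioo x₀ T, a' < h x := by
      intro x ⟨hx1, hx2⟩
      by_contra hcon3
      push_neg at hcon3
      have : x ∈ S := ⟨le_of_lt hx1, hcon3⟩
      have := csInf_le hSbdd this
      rw [← hT_def] at this
      linarith
    -- h is monotone on [x₀, T]
    have hmono : MonotoneOn h (Set.Icc x₀ T) := by
      apply monotoneOn_of_deriv_nonneg (convex_Icc x₀ T) hdiff.continuous.continuousOn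
        (hdiff.differentiableOn.mono interior_subset)
      intro x hx
      rw [interior_Icc] at hx
      have hax := hmid x hx
      rw [ode' x]
      have : c ^ 2 ≤ h x ^ 2 := by nlinarith
      linarith
    have := hmono (Set.left_mem_Icc.mpr (le_of_lt hx₀T))
      (Set.right_mem_Icc.mpr (le_of_lt hx₀T)) (le_of_lt hx₀T)
    linarith
  -- Step 2: blow-up comparison
  set L : ℝ := 1 - c ^ 2 / a' ^ 2 with hL_def
  have hL : 0 < L := by
    have : c ^ 2 < a' ^ 2 := by nlinarith
    have : c ^ 2 / a' ^ 2 < 1 := by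
      rw [div_lt_one (by positivity)]
      exact this
    simp only [hL_def]; linarith
  set ψ : ℝ → ℝ := fun x => -(h x)⁻¹ - (L / 2) * x with hψ_def
  have hne : ∀ x, x₀ ≤ x → h x ≠ 0 := fun x hx => ne_of_gt (lt_of_lt_of_le ha' (hge x hx))
  have hψderiv : ∀ x, x₀ ≤ x → HasDerivAt ψ (deriv h x / h x ^ 2 - L / 2) x := by
    intro x hx
    have h1 : HasDerivAt (fun y => (h y)⁻¹) (-(deriv h x) / h x ^ 2) x :=
      (hdiff x).hasDerivAt.inv (hne x hx)
    have h2 : HasDerivAt (fun y : ℝ => (L / 2) * y) (L / 2) x := by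
      simpa using (hasDerivAt_id x).const_mul (L / 2)
    have := h1.neg.sub h2
    exact this.congr_deriv (by ring)
  have hψmono : MonotoneOn ψ (Set.Ici x₀) := by
    apply monotoneOn_of_deriv_nonneg (convex_Ici x₀)
    · apply ContinuousOn.sub
      · apply ContinuousOn.neg
        exact ContinuousOn.inv₀ hdiff.continuous.continuousOn (fun x hx => hne x hx)
      · exact (continuous_const.mul continuous_id).continuousOn
    · intro x hx
      rw [interior_Ici] at hx
      exact (hψderiv x (le_of_lt hx)).differentiableAt.differentiableWithinAt
    · intro x hx
      rw [interior_Ici] at hx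
      rw [(hψderiv x (le_of_lt hx)).deriv, ode' x]
      have hax : a' ≤ h x := hge x (le_of_lt hx)
      have hhx : 0 < h x := lt_of_lt_of_le ha' hax
      have hsq : a' ^ 2 ≤ h x ^ 2 := by nlinarith
      have key : c ^ 2 / h x ^ 2 ≤ c ^ 2 / a' ^ 2 := by
        apply div_le_div_of_nonneg_left (by positivity) (by positivity) hsq
      have k2 : c ^ 2 ≤ c ^ 2 / a' ^ 2 * h x ^ 2 := by
        have hpos : (0:ℝ) < h x ^ 2 := by positivity
        have := mul_le_mul_of_nonneg_right key (le_of_lt hpos)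
        rwa [div_mul_cancel₀ _ (ne_of_gt hpos)] at this
      rw [sub_nonneg, hL_def, div_div, div_le_div_iff₀ (by norm_num) (by positivity)]
      nlinarith [k2]
  -- get contradiction at a large point
  set y : ℝ := x₀ + 2 / (L * a') + 1 with hy_def
  have hx₀y : x₀ ≤ y := by
    have : 0 < 2 / (L * a') := by positivity
    simp only [hy_def]; linarith
  have hmono2 := hψmono (Set.self_mem_Ici) (Set.mem_Ici.mpr hx₀y) hx₀y
  simp only [hψ_def] at hmono2
  have hhy : 0 < h y := lt_of_lt_of_le ha' (hge y hx₀y)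
  have hinvy : 0 < (h y)⁻¹ := inv_pos.mpr hhy
  have hinvx₀ : (h x₀)⁻¹ ≤ a'⁻¹ := by
    exact inv_anti₀ ha' (le_of_lt haa')
  have hcalc : L / 2 * (y - x₀) = a'⁻¹ + L / 2 := by
    simp only [hy_def]
    field_simp
    ring
  have hcalc' : L / 2 * y - L / 2 * x₀ = a'⁻¹ + L / 2 := by rw [← hcalc]; ring
  have ha'inv : 0 < a'⁻¹ := inv_pos.mpr ha'
  clear_value y L a' c
  linarith [hmono2, hcalc', hinvy, hinvx₀, hL]

theorem stmt_4 (ℓ : ℝ) (hℓ : 0 < ℓ) (h : ℝ → ℝ)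
    (hdiff : Differentiable ℝ h)
    (hode : ∀ x : ℝ, deriv h x = (1/2) * (h x)^2 - 2/ℓ^2) :
    ∀ x : ℝ, |h x| ≤ 2/ℓ := by
  intro x
  rw [abs_le]
  constructor
  · -- lower bound via reflected function
    set g : ℝ → ℝ := fun y => -h (-y) with hg_def
    have hgdiff : Differentiable ℝ g := (hdiff.comp differentiable_neg).neg
    have hgode : ∀ y : ℝ, deriv g y = (1/2) * (g y)^2 - 2/ℓ^2 := by
      intro y
      have h1 : HasDerivAt g (deriv h (-y)) y := by
        have := ((hdiff (-y)).hasDerivAt.comp y (hasDerivAt_neg y)).neg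
        exact this.congr_deriv (by ring)
      rw [h1.deriv, hode (-y)]
      simp only [hg_def]
      ring
    have := riccati_upper ℓ hℓ g hgdiff hgode (-x)
    simp only [hg_def, neg_neg] at this
    linarith
  · exact riccati_upper ℓ hℓ h hdiff hode x
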